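/- arXiv:1102.4595 — 5 statements merged into one kernel-verified Lean document; each statement's English description precedes it below -/
import Mathlib

section
/- If vectors $v_1,\ldots,v_n$ in a finite-dimensional Euclidean space all lie in a common open half-space (i.e., there is a linear functional positive on all of them) and the angles between them are pairwise non-acute (pairwise inner products are $\le 0$), then $v_1,\ldots,v_n$ are linearly independent. -/
open scoped InnerProductSpace

/-- If vectors `v 1, …, v n` of a finite-dimensional Euclidean space lie in a common open
half-space (there is a linear functional positive on all of them) and the angles between
them are pairwise non-acute (pairwise inner products are `≤ 0`), then they are linearly
independent. -/
theorem vectors_in_halfspace_pairwise_nonacute_linearIndependent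
    {V : Type} [NormedAddCommGroup V] [InnerProductSpace ℝ V] [FiniteDimensional ℝ V]
    {n : ℕ} (v : Fin n → V) (f : V →ₗ[ℝ] ℝ) (hf : ∀ i, 0 < f (v i))
    (hangle : ∀ i j, i ≠ j → ⟪v i, v j⟫_ℝ ≤ 0) :
    LinearIndependent ℝ v := by
  classical
  rw [Fintype.linearIndependent_iff]
  intro g hg
  set P := Finset.univ.filter (fun i => 0 < g i) with hP
  set N := Finset.univ.filter (fun i => g i < 0) with hN
  have hdisj : Disjoint P N := by
    rw [Finset.disjoint_left]
    intro i hi hi'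
    simp only [hP, hN, Finset.mem_filter] at hi hi'
    linarith [hi.2, hi'.2]
  have key : ∑ i ∈ P, g i • v i + ∑ i ∈ N, g i • v i = 0 := by
    rw [← Finset.sum_union hdisj, ← hg]
    apply Finset.sum_subset (Finset.subset_univ _)
    intro i _ hi
    simp only [Finset.mem_union, hP, hN, Finset.mem_filter, Finset.mem_univ,
      true_and, not_or, not_lt] at hi
    have : g i = 0 := le_antisymm hi.1 hi.2
    simp [this]
  set w := ∑ i ∈ P, g i • v i with hw
  have hw' : w = ∑ i ∈ N, (-g i) • v i := by
    have : w = -∑ i ∈ N, g i • v i := by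
      rw [eq_neg_iff_add_eq_zero]; exact key
    rw [this, ← Finset.sum_neg_distrib]
    congr 1; ext i; rw [neg_smul]
  have hwzero : w = 0 := by
    have hle : ⟪w, w⟫_ℝ ≤ 0 := by
      have heq : ⟪w, w⟫_ℝ = ⟪∑ i ∈ P, g i • v i, ∑ i ∈ N, (-g i) • v i⟫_ℝ := by
        rw [← hw, ← hw']
      rw [heq, sum_inner]
      apply Finset.sum_nonpos
      intro i hi
      rw [inner_sum]
      apply Finset.sum_nonpos
      intro j hj
      rw [real_inner_smul_left, real_inner_smul_right]
      simp only [hP, hN, Finset.mem_filter] at hi hj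
      have hij : i ≠ j := by
        intro h; rw [h] at hi; linarith [hi.2, hj.2]
      have h1 : 0 < g i := hi.2
      have h2 : 0 < -g j := by linarith [hj.2]
      have h3 : ⟪v i, v j⟫_ℝ ≤ 0 := hangle i j hij
      nlinarith [mul_pos h1 h2, mul_nonneg h1.le h2.le]
    have := real_inner_self_nonneg (x := w)
    exact inner_self_eq_zero.mp (le_antisymm hle this)
  have hPempty : P = ∅ := by
    by_contra hne
    have hpos : 0 < ∑ i ∈ P, g i * f (v i) := by
      apply Finset.sum_pos
      · intro i hi
        simp only [hP, Finset.mem_filter] at hi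
        exact mul_pos hi.2 (hf i)
      · exact Finset.nonempty_of_ne_empty hne
    have : f w = 0 := by rw [hwzero]; simp
    rw [hw, map_sum] at this
    simp only [map_smul, smul_eq_mul] at this
    linarith
  have hNempty : N = ∅ := by
    by_contra hne
    have hpos : 0 < ∑ i ∈ N, (-g i) * f (v i) := by
      apply Finset.sum_pos
      · intro i hi
        simp only [hN, Finset.mem_filter] at hi
        exact mul_pos (by linarith [hi.2]) (hf i)
      · exact Finset.nonempty_of_ne_empty hne
    have : f w = 0 := by rw [hwzero]; simp
    rw [hw', map_sum] at this
    simp only [map_smul, smul_eq_mul] at this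
    linarith
  intro i
  by_contra hgi
  rcases lt_or_gt_of_ne hgi with h | h
  · have : i ∈ N := by simp [hN, h]
    rw [hNempty] at this; exact absurd this (Finset.notMem_empty i)
  · have : i ∈ P := by simp [hP, h]
    rw [hPempty] at this; exact absurd this (Finset.notMem_empty i)
end

section
/- Let $\Delta$ be a root system of type $A$, $D$, or $E$ (all roots of the same length), with positive roots $\Delta_+$ relative to a base $\Pi$. For $\alpha \in \Delta_+$, let $s(\alpha)$ denote the number of unordered representations of $\alpha$ as a sum of two positive roots. Then $s(\alpha) = \mathrm{ht}(\alpha) - 1$, where $\mathrm{ht}(\alpha)$ is the height of $\alpha$ (the sum of its coefficients over simple roots). -/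
open scoped InnerProductSpace

/-- A reduced crystallographic root system in a Euclidean space `V`, together with a chosen
base of simple roots and the (integer) coordinates of each root in this base. -/
structure RootSystemData (V : Type) [NormedAddCommGroup V] [InnerProductSpace ℝ V] where
  /-- the set of roots -/
  roots : Set V
  /-- the set of simple roots (the base) -/
  simples : Finset V
  finite : roots.Finite
  ne_zero : ∀ α ∈ roots, α ≠ (0 : V)
  neg_mem : ∀ α ∈ roots, -α ∈ roots
  reduced : ∀ α ∈ roots, (2 : ℝ) • α ∉ roots
  reflect_mem : ∀ α ∈ roots, ∀ β ∈ roots,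
    β - (2 * ⟪α, β⟫_ℝ / ⟪α, α⟫_ℝ) • α ∈ roots
  cartan_int : ∀ α ∈ roots, ∀ β ∈ roots, ∃ n : ℤ,
    2 * ⟪α, β⟫_ℝ / ⟪α, α⟫_ℝ = (n : ℝ)
  simples_mem : ∀ γ ∈ simples, γ ∈ roots
  simples_indep : LinearIndependent ℝ (fun γ : simples => (γ : V))
  /-- `coeff α γ` is the coefficient of the simple root `γ` in the root `α` -/
  coeff : V → V → ℤ
  coeff_spec : ∀ α ∈ roots, α = ∑ γ ∈ simples, coeff α γ • γ
  coeff_sign : ∀ α ∈ roots,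
    (∀ γ ∈ simples, 0 ≤ coeff α γ) ∨ (∀ γ ∈ simples, coeff α γ ≤ 0)

namespace RootSystemData

variable {V : Type} [NormedAddCommGroup V] [InnerProductSpace ℝ V]

/-- The set of positive roots with respect to the base. -/
def pos (R : RootSystemData V) : Set V :=
  {α ∈ R.roots | ∀ γ ∈ R.simples, 0 ≤ R.coeff α γ}

/-- The support of a root: the simple roots occurring in it with nonzero coefficient. -/
def Supp (R : RootSystemData V) (α : V) : Finset V :=
  R.simples.filter fun γ => R.coeff α γ ≠ 0

/-- The height of a root: the sum of its coefficients over the simple roots. -/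
def height (R : RootSystemData V) (α : V) : ℤ :=
  ∑ γ ∈ R.simples, R.coeff α γ

/-- `s(α)`: the number of unordered representations of `α` as a sum of two positive
roots. -/
noncomputable def numDecomp (R : RootSystemData V) (α : V) : ℕ :=
  {z : Sym2 V | ∃ β ∈ R.pos, ∃ γ ∈ R.pos, z = Sym2.mk β γ ∧ β + γ = α}.ncard

end RootSystemData


open scoped InnerProductSpace

section Aux
variable {V : Type} [NormedAddCommGroup V] [InnerProductSpace ℝ V]
variable (R : RootSystemData V)

namespace RSAux

attribute [local instance] Classical.propDecidable

open RootSystemData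

theorem coeff_unique (c d : V → ℤ)
    (h : ∑ γ ∈ R.simples, c γ • γ = ∑ γ ∈ R.simples, d γ • γ) :
    ∀ γ ∈ R.simples, c γ = d γ := by
  have h0 : ∑ γ ∈ R.simples, (((c γ - d γ : ℤ) : ℝ)) • γ = 0 := by
    have : ∀ γ ∈ R.simples, (((c γ - d γ : ℤ) : ℝ)) • γ = c γ • γ - d γ • γ := by
      intro γ _
      push_cast
      rw [sub_smul, Int.cast_smul_eq_zsmul, Int.cast_smul_eq_zsmul]
    rw [Finset.sum_congr rfl this, Finset.sum_sub_distrib, h, sub_self]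
  have h1 : ∑ i : R.simples, (((c i - d i : ℤ) : ℝ)) • (i : V) = 0 := by
    rw [Finset.sum_coe_sort R.simples (fun γ => (((c γ - d γ : ℤ) : ℝ)) • γ)]
    exact h0
  have := (Fintype.linearIndependent_iff.mp R.simples_indep) _ h1
  intro γ hγ
  have := this ⟨γ, hγ⟩
  have : ((c γ - d γ : ℤ) : ℝ) = 0 := this
  have : (c γ - d γ : ℤ) = 0 := by exact_mod_cast this
  omega

theorem coeff_eq_of_eq_sum {α : V} (hα : α ∈ R.roots) (d : V → ℤ)
    (h : α = ∑ γ ∈ R.simples, d γ • γ) :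
    ∀ γ ∈ R.simples, R.coeff α γ = d γ :=
  coeff_unique R _ _ (by rw [← R.coeff_spec α hα, h])

theorem coeff_neg {α : V} (hα : α ∈ R.roots) :
    ∀ γ ∈ R.simples, R.coeff (-α) γ = -R.coeff α γ := by
  apply coeff_eq_of_eq_sum R (R.neg_mem α hα)
  conv_lhs => rw [R.coeff_spec α hα]
  rw [← Finset.sum_neg_distrib]
  exact Finset.sum_congr rfl fun γ _ => (neg_smul _ _).symm

theorem coeff_simple {γ : V} (hγ : γ ∈ R.simples) :
    ∀ δ ∈ R.simples, R.coeff γ δ = if δ = γ then 1 else 0 := by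
  apply coeff_eq_of_eq_sum R (R.simples_mem γ hγ)
  rw [show ∑ δ ∈ R.simples, (if δ = γ then (1:ℤ) else 0) • δ
      = ∑ δ ∈ R.simples, (if δ = γ then δ else 0) by
    refine Finset.sum_congr rfl fun δ _ => ?_
    split <;> simp]
  rw [Finset.sum_ite_eq' R.simples γ (fun δ => δ), if_pos hγ]

theorem simple_pos {γ : V} (hγ : γ ∈ R.simples) : γ ∈ R.pos := by
  refine ⟨R.simples_mem γ hγ, fun δ hδ => ?_⟩
  rw [coeff_simple R hγ δ hδ]
  split <;> omega

theorem not_pos_neg {α : V} (hα : α ∈ R.pos) (hα' : -α ∈ R.pos) : False := by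
  have h0 : ∀ γ ∈ R.simples, R.coeff α γ = 0 := by
    intro γ hγ
    have h1 := hα.2 γ hγ
    have h2 := hα'.2 γ hγ
    rw [coeff_neg R hα.1 γ hγ] at h2
    omega
  have : α = 0 := by
    rw [R.coeff_spec α hα.1]
    exact Finset.sum_eq_zero fun γ hγ => by rw [h0 γ hγ, zero_smul]
  exact R.ne_zero α hα.1 this

theorem mem_pos_or_neg {α : V} (hα : α ∈ R.roots) : α ∈ R.pos ∨ -α ∈ R.pos := by
  rcases R.coeff_sign α hα with h | h
  · exact Or.inl ⟨hα, h⟩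
  · refine Or.inr ⟨R.neg_mem α hα, fun γ hγ => ?_⟩
    rw [coeff_neg R hα γ hγ]
    exact neg_nonneg.mpr (h γ hγ)

theorem pos_add {β δ : V} (hβ : β ∈ R.pos) (hδ : δ ∈ R.pos)
    (hr : β + δ ∈ R.roots) : β + δ ∈ R.pos := by
  refine ⟨hr, fun γ hγ => ?_⟩
  have : R.coeff (β + δ) γ = R.coeff β γ + R.coeff δ γ := by
    refine coeff_eq_of_eq_sum R hr (fun γ => R.coeff β γ + R.coeff δ γ) ?_ γ hγ
    conv_lhs => rw [R.coeff_spec β hβ.1, R.coeff_spec δ hδ.1]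
    rw [← Finset.sum_add_distrib]
    exact Finset.sum_congr rfl fun γ _ => (add_smul _ _ _).symm
  rw [this]
  have := hβ.2 γ hγ
  have := hδ.2 γ hγ
  omega

end RSAux
end Aux

section Aux2
variable {V : Type} [NormedAddCommGroup V] [InnerProductSpace ℝ V]
variable (R : RootSystemData V) {c : ℝ}

namespace RSAux

variable (hc : ∀ β ∈ R.roots, ⟪β, β⟫_ℝ = c) (hc0 : 0 < c)

include hc hc0
set_option linter.unusedSectionVars false

theorem norm_eq {β : V} (hβ : β ∈ R.roots) : ‖β‖ = Real.sqrt c := by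
  rw [← hc β hβ, real_inner_self_eq_norm_sq, Real.sqrt_sq (norm_nonneg β)]

theorem nR_int {β γ : V} (hβ : β ∈ R.roots) (hγ : γ ∈ R.roots) :
    ∃ m : ℤ, 2 * ⟪β, γ⟫_ℝ / c = (m : ℝ) := by
  obtain ⟨m, hm⟩ := R.cartan_int γ hγ β hβ
  exact ⟨m, by rwa [hc γ hγ, real_inner_comm] at hm⟩

theorem nR_floor {β γ : V} (hβ : β ∈ R.roots) (hγ : γ ∈ R.roots) :
    ((⌊2 * ⟪β, γ⟫_ℝ / c⌋ : ℤ) : ℝ) = 2 * ⟪β, γ⟫_ℝ / c := by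
  obtain ⟨m, hm⟩ := nR_int R hc hc0 hβ hγ
  rw [hm, Int.floor_intCast]

theorem nR_abs_le {β γ : V} (hβ : β ∈ R.roots) (hγ : γ ∈ R.roots) :
    |2 * ⟪β, γ⟫_ℝ / c| ≤ 2 := by
  have h1 : |⟪β, γ⟫_ℝ| ≤ c := by
    have := abs_real_inner_le_norm β γ
    rwa [norm_eq R hc hc0 hβ, norm_eq R hc hc0 hγ, Real.mul_self_sqrt hc0.le] at this
  rw [abs_div, abs_of_pos hc0, div_le_iff₀ hc0, abs_mul]
  simp only [abs_two]
  nlinarith [abs_nonneg (⟪β, γ⟫_ℝ)]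

theorem eq_of_nR_eq_two {β γ : V} (hβ : β ∈ R.roots) (hγ : γ ∈ R.roots)
    (h : 2 * ⟪β, γ⟫_ℝ / c = 2) : β = γ := by
  have hin : ⟪β, γ⟫_ℝ = c := by field_simp at h; linarith
  have hnn : ‖β‖ = Real.sqrt c := norm_eq R hc hc0 hβ
  have hnn' : ‖γ‖ = Real.sqrt c := norm_eq R hc hc0 hγ
  have : ⟪β, γ⟫_ℝ = ‖β‖ * ‖γ‖ := by
    rw [hnn, hnn', Real.mul_self_sqrt hc0.le, hin]
  have h2 := inner_eq_norm_mul_iff_real.mp this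
  rw [hnn, hnn'] at h2
  have hs : Real.sqrt c ≠ 0 := by positivity
  exact smul_right_injective V hs h2

theorem eq_neg_of_nR_eq_neg_two {β γ : V} (hβ : β ∈ R.roots) (hγ : γ ∈ R.roots)
    (h : 2 * ⟪β, γ⟫_ℝ / c = -2) : β = -γ := by
  have : 2 * ⟪β, -γ⟫_ℝ / c = 2 := by
    rw [inner_neg_right]; rw [show 2 * -⟪β, γ⟫_ℝ / c = -(2 * ⟪β, γ⟫_ℝ / c) by ring, h]; norm_num
  exact eq_of_nR_eq_two R hc hc0 hβ (R.neg_mem γ hγ) this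

theorem reflect' {β γ : V} (hβ : β ∈ R.roots) (hγ : γ ∈ R.roots)
    {m : ℤ} (hm : (m : ℝ) = 2 * ⟪β, γ⟫_ℝ / c) : β - m • γ ∈ R.roots := by
  have h := R.reflect_mem γ hγ β hβ
  have he : (2 * ⟪γ, β⟫_ℝ / ⟪γ, γ⟫_ℝ) • γ = m • γ := by
    rw [hc γ hγ, real_inner_comm, ← hm, Int.cast_smul_eq_zsmul]
  rwa [he] at h

theorem nR_of_add_root {β γ : V} (hβ : β ∈ R.roots) (hγ : γ ∈ R.roots)
    (h : β + γ ∈ R.roots) : 2 * ⟪β, γ⟫_ℝ / c = -1 := by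
  have h1 := hc _ h
  rw [real_inner_add_add_self, hc β hβ, hc γ hγ] at h1
  have : ⟪β, γ⟫_ℝ = -(c / 2) := by linarith
  rw [this]; field_simp

theorem add_root_of_nR {β γ : V} (hβ : β ∈ R.roots) (hγ : γ ∈ R.roots)
    (h : 2 * ⟪β, γ⟫_ℝ / c = -1) : β + γ ∈ R.roots := by
  have := reflect' R hc hc0 hβ hγ (m := -1) (by rw [h]; norm_num)
  simpa using this

theorem smul_eq_of_root {γ : V} (hγ : γ ∈ R.roots) {k : ℤ} (hk : (k : ℤ) • γ ∈ R.roots) :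
    k = 1 ∨ k = -1 := by
  have h1 := hc _ hk
  have h2 : ((k:ℤ) • γ : V) = ((k:ℝ)) • γ := (Int.cast_smul_eq_zsmul ℝ k γ).symm
  rw [h2, real_inner_smul_left, inner_smul_right, hc γ hγ] at h1
  have hck : (k : ℝ) * ((k:ℝ)) = 1 := by
    have h3 : ((k:ℝ) * (k:ℝ)) * c = 1 * c := by rw [one_mul]; linarith [h1]
    exact mul_right_cancel₀ (ne_of_gt hc0) h3
  have := mul_self_eq_one_iff.mp hck
  rcases this with h | h
  · left; exact_mod_cast h
  · right; exact_mod_cast h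

end RSAux
end Aux2

section Aux3
variable {V : Type} [NormedAddCommGroup V] [InnerProductSpace ℝ V]
variable (R : RootSystemData V) {c : ℝ}

namespace RSAux

set_option linter.unusedSectionVars false
attribute [local instance] Classical.propDecidable

noncomputable def posFinset : Finset V := (R.finite.subset (fun x (hx : x ∈ R.pos) => hx.1)).toFinset

theorem mem_posFinset {β : V} : β ∈ posFinset R ↔ β ∈ R.pos := by
  unfold posFinset; exact Set.Finite.mem_toFinset _

theorem inner_sub_zsmul (β γ : V) (m : ℤ) :
    ⟪β - m • γ, γ⟫_ℝ = ⟪β, γ⟫_ℝ - m * ⟪γ, γ⟫_ℝ := by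
  rw [inner_sub_left, ← Int.cast_smul_eq_zsmul ℝ, real_inner_smul_left]

variable (hc : ∀ β ∈ R.roots, ⟪β, β⟫_ℝ = c) (hc0 : 0 < c)

include hc hc0

theorem nR_sub_zsmul {γ : V} (hγ : γ ∈ R.roots) (β : V) (m : ℤ) :
    2 * ⟪β - m • γ, γ⟫_ℝ / c = 2 * ⟪β, γ⟫_ℝ / c - 2 * m := by
  rw [inner_sub_zsmul, hc γ hγ]
  field_simp

theorem reflect_pos {β γ : V} (hβ : β ∈ R.pos) (hγ : γ ∈ R.simples) (hne : β ≠ γ)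
    {m : ℤ} (hm : (m : ℝ) = 2 * ⟪β, γ⟫_ℝ / c) : β - m • γ ∈ R.pos := by
  have hγr := R.simples_mem γ hγ
  have hroot : β - m • γ ∈ R.roots := reflect' R hc hc0 hβ.1 hγr hm
  have hex : ∃ δ ∈ R.simples, δ ≠ γ ∧ R.coeff β δ ≠ 0 := by
    by_contra h
    push_neg at h
    have hβe : β = R.coeff β γ • γ := by
      conv_lhs => rw [R.coeff_spec β hβ.1]
      rw [Finset.sum_eq_single γ]
      · intro b hb hbne; rw [h b hb hbne, zero_smul]
      · intro habs; exact absurd hγ habs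
    have hk : R.coeff β γ • γ ∈ R.roots := hβe ▸ hβ.1
    rcases smul_eq_of_root R hc hc0 hγr hk with h1 | h1
    · rw [h1, one_smul] at hβe; exact hne hβe
    · rw [h1] at hβe
      have : β = -γ := by rw [hβe]; simp
      exact not_pos_neg R (simple_pos R hγ) (this ▸ hβ)
  obtain ⟨δ, hδs, hδne, hδ0⟩ := hex
  have hco : ∀ δ' ∈ R.simples,
      R.coeff (β - m • γ) δ' = R.coeff β δ' - (if δ' = γ then m else 0) := by
    apply coeff_eq_of_eq_sum R hroot (fun δ' => R.coeff β δ' - if δ' = γ then m else 0)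
    have h1 : ∑ δ' ∈ R.simples, (R.coeff β δ' - if δ' = γ then m else 0) • δ'
        = (∑ δ' ∈ R.simples, R.coeff β δ' • δ')
          - ∑ δ' ∈ R.simples, (if δ' = γ then m else 0) • δ' := by
      rw [← Finset.sum_sub_distrib]
      exact Finset.sum_congr rfl fun _ _ => sub_smul _ _ _
    have h2 : ∑ δ' ∈ R.simples, (if δ' = γ then m else 0) • δ' = m • γ := by
      have e : ∀ x ∈ R.simples, (if x = γ then m else 0) • x = if x = γ then m • x else 0 :=
        fun x _ => by split <;> simp
      rw [Finset.sum_congr rfl e, Finset.sum_ite_eq' R.simples γ (fun x => m • x), if_pos hγ]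
    rw [h1, h2, ← R.coeff_spec β hβ.1]
  have hpos : 0 < R.coeff (β - m • γ) δ := by
    rw [hco δ hδs, if_neg hδne]
    have := hβ.2 δ hδs
    omega
  rcases R.coeff_sign _ hroot with h | h
  · exact ⟨hroot, h⟩
  · exact absurd (h δ hδs) (by omega)

theorem sum_nR_simple {γ : V} (hγ : γ ∈ R.simples) :
    ∑ β ∈ posFinset R, 2 * ⟪β, γ⟫_ℝ / c = 2 := by
  have hγr := R.simples_mem γ hγ
  have hγp : γ ∈ posFinset R := (mem_posFinset R).2 (simple_pos R hγ)
  rw [← Finset.add_sum_erase _ _ hγp]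
  have h2 : 2 * ⟪γ, γ⟫_ℝ / c = 2 := by
    rw [hc γ hγr]; field_simp
  have h0 : ∑ β ∈ (posFinset R).erase γ, 2 * ⟪β, γ⟫_ℝ / c = 0 := by
    apply Finset.sum_involution (g := fun β _ => β - ⌊2 * ⟪β, γ⟫_ℝ / c⌋ • γ)
    · -- h₁ : f a + f (g a) = 0
      intro β hβ
      have hβp := (mem_posFinset R).1 (Finset.mem_of_mem_erase hβ)
      have hm := nR_floor R hc hc0 hβp.1 hγr
      rw [nR_sub_zsmul R hc hc0 hγr, hm]
      ring
    · -- h₂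
      intro β hβ hf0 hgβ
      have hβp := (mem_posFinset R).1 (Finset.mem_of_mem_erase hβ)
      have hm := nR_floor R hc hc0 hβp.1 hγr
      have : (⌊2 * ⟪β, γ⟫_ℝ / c⌋ : ℤ) • γ = 0 := by
        have := sub_eq_self.mp hgβ
        exact this
      rw [← Int.cast_smul_eq_zsmul ℝ] at this
      rcases smul_eq_zero.mp this with h | h
      · rw [← hm, h] at hf0; simp at hf0
      · exact R.ne_zero γ hγr h
    · -- g_mem
      intro β hβ
      have hβγ := Finset.ne_of_mem_erase hβ
      have hβp := (mem_posFinset R).1 (Finset.mem_of_mem_erase hβ)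
      have hm := nR_floor R hc hc0 hβp.1 hγr
      have hgp : β - ⌊2 * ⟪β, γ⟫_ℝ / c⌋ • γ ∈ R.pos :=
        reflect_pos R hc hc0 hβp hγ hβγ hm
      refine Finset.mem_erase.2 ⟨?_, (mem_posFinset R).2 hgp⟩
      intro heq
      set m := ⌊2 * ⟪β, γ⟫_ℝ / c⌋ with hmdef
      rw [sub_eq_iff_eq_add] at heq
      have hβe : β = (m + 1) • γ := by
        rw [add_smul, one_smul, heq]; abel
      have hk : (m + 1) • γ ∈ R.roots := hβe ▸ hβp.1
      rcases smul_eq_of_root R hc hc0 hγr hk with h1 | h1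
      · rw [h1, one_smul] at hβe; exact hβγ hβe
      · rw [h1] at hβe
        have : β = -γ := by rw [hβe]; simp
        exact not_pos_neg R (simple_pos R hγ) (this ▸ hβp)
    · -- involutive
      intro β hβ
      have hβγ := Finset.ne_of_mem_erase hβ
      have hβp := (mem_posFinset R).1 (Finset.mem_of_mem_erase hβ)
      have hm := nR_floor R hc hc0 hβp.1 hγr
      set m := ⌊2 * ⟪β, γ⟫_ℝ / c⌋ with hmdef
      have hfl : ⌊2 * ⟪β - m • γ, γ⟫_ℝ / c⌋ = -m := by
        have hval : 2 * ⟪β - m • γ, γ⟫_ℝ / c = ((-m : ℤ) : ℝ) := by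
          rw [nR_sub_zsmul R hc hc0 hγr]
          push_cast
          linarith [hm]
        rw [hval, Int.floor_intCast]
      rw [hfl, neg_smul, sub_neg_eq_add, sub_add_cancel]
  rw [h0, h2, add_zero]

theorem sum_nR_height {α : V} (hα : α ∈ R.pos) :
    ∑ β ∈ posFinset R, 2 * ⟪β, α⟫_ℝ / c = 2 * (R.height α : ℝ) := by
  have hterm : ∀ β ∈ posFinset R, 2 * ⟪β, α⟫_ℝ / c
      = ∑ γ ∈ R.simples, (R.coeff α γ : ℝ) * (2 * ⟪β, γ⟫_ℝ / c) := by
    intro β _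
    conv_lhs => rw [R.coeff_spec α hα.1]
    rw [inner_sum, Finset.mul_sum, Finset.sum_div]
    refine Finset.sum_congr rfl fun γ _ => ?_
    rw [← Int.cast_smul_eq_zsmul ℝ, real_inner_smul_right]
    ring
  rw [Finset.sum_congr rfl hterm, Finset.sum_comm]
  have h2 : ∀ γ ∈ R.simples,
      ∑ β ∈ posFinset R, (R.coeff α γ : ℝ) * (2 * ⟪β, γ⟫_ℝ / c)
      = (R.coeff α γ : ℝ) * 2 := by
    intro γ hγ
    rw [← Finset.mul_sum, sum_nR_simple R hc hc0 hγ]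
  rw [Finset.sum_congr rfl h2, RootSystemData.height, ← Finset.sum_mul]
  push_cast
  ring

end RSAux
end Aux3

section Aux4
variable {V : Type} [NormedAddCommGroup V] [InnerProductSpace ℝ V]
variable (R : RootSystemData V) {c : ℝ}

namespace RSAux

set_option linter.unusedSectionVars false
attribute [local instance] Classical.propDecidable

variable (hc : ∀ β ∈ R.roots, ⟪β, β⟫_ℝ = c) (hc0 : 0 < c)

include hc hc0

theorem key_g {α β : V} (hα : α ∈ R.pos) (hβp : β ∈ R.pos) (hβα : β ≠ α)
    (hnp : α - β ∉ R.pos) :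
    (β - ⌊2 * ⟪β, α⟫_ℝ / c⌋ • α ∈ R.pos) ∧ (β - ⌊2 * ⟪β, α⟫_ℝ / c⌋ • α ≠ α) ∧
      (α - (β - ⌊2 * ⟪β, α⟫_ℝ / c⌋ • α) ∉ R.pos) := by
  have hαr := hα.1
  have hβr := hβp.1
  have hm := nR_floor R hc hc0 hβr hαr
  have habs : |(⌊2 * ⟪β, α⟫_ℝ / c⌋ : ℤ)| ≤ 2 := by
    have h := nR_abs_le R hc hc0 hβr hαr
    rw [← hm] at h
    exact_mod_cast h
  set m := ⌊2 * ⟪β, α⟫_ℝ / c⌋ with hmdef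
  have hm2 : m ≠ 2 := by
    intro h
    apply hβα
    apply eq_of_nR_eq_two R hc hc0 hβr hαr
    rw [← hm, h]; norm_num
  have hmn2 : m ≠ -2 := by
    intro h
    have : β = -α := by
      apply eq_neg_of_nR_eq_neg_two R hc hc0 hβr hαr
      rw [← hm, h]; norm_num
    exact not_pos_neg R hα (this ▸ hβp)
  have hroot : β - m • α ∈ R.roots := reflect' R hc hc0 hβr hαr hm
  clear_value m
  clear hmdef
  have hlo : -1 ≤ m := by rw [abs_le] at habs; omega
  have hhi : m ≤ 1 := by rw [abs_le] at habs; omega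
  interval_cases m
  · -- m = -1
    have hg : β - (-1 : ℤ) • α = β + α := by simp
    rw [hg]
    have hgp : β + α ∈ R.pos := pos_add R hβp hα (hg ▸ hroot)
    refine ⟨hgp, ?_, ?_⟩
    · intro h
      have : β = 0 := by
        have := add_right_cancel (b := α) (a := β) (c := 0)
        apply this; rwa [zero_add]
      exact R.ne_zero β hβr this
    · intro h
      have : α - (β + α) = -β := by abel
      rw [this] at h
      exact not_pos_neg R hβp h
  · -- m = 0
    have hg : β - (0 : ℤ) • α = β := by simp
    rw [hg]
    exact ⟨hβp, hβα, hnp⟩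
  · -- m = 1
    have hg : β - (1 : ℤ) • α = β - α := by simp
    rw [hg]
    have hroot' : β - α ∈ R.roots := hg ▸ hroot
    have hgp : β - α ∈ R.pos := by
      rcases mem_pos_or_neg R hroot' with h | h
      · exact h
      · rw [neg_sub] at h; exact absurd h hnp
    refine ⟨hgp, ?_, ?_⟩
    · intro h
      have h2 : β = (2 : ℝ) • α := by
        rw [two_smul]
        rw [sub_eq_iff_eq_add] at h
        rw [h]
      exact R.reduced α hαr (h2 ▸ hβr)
    · intro h
      have hδr := h.1
      have hvb : 2 * ⟪β, α⟫_ℝ = c := by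
        have : ((1 : ℤ) : ℝ) = 2 * ⟪β, α⟫_ℝ / c := hm
        rw [eq_div_iff (ne_of_gt hc0)] at this
        push_cast at this
        linarith
      have habs2 := nR_abs_le R hc hc0 hδr hαr
      have hval : 2 * ⟪α - (β - α), α⟫_ℝ / c = 3 := by
        rw [inner_sub_left, inner_sub_left, hc α hαr]
        field_simp
        linarith
      rw [hval] at habs2
      norm_num at habs2

theorem card_decomp {α : V} (hα : α ∈ R.pos) :
    (((posFinset R).filter (fun β => α - β ∈ R.pos)).card : ℝ)
      = 2 * (R.height α : ℝ) - 2 := by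
  classical
  have hαr := hα.1
  have hαP : α ∈ posFinset R := (mem_posFinset R).2 hα
  have htot := sum_nR_height R hc hc0 hα
  rw [← Finset.add_sum_erase _ _ hαP] at htot
  have hfα : 2 * ⟪α, α⟫_ℝ / c = 2 := by rw [hc α hαr]; field_simp
  rw [hfα] at htot
  rw [← Finset.sum_filter_add_sum_filter_not ((posFinset R).erase α)
    (fun β => α - β ∈ R.pos) (fun β => 2 * ⟪β, α⟫_ℝ / c)] at htot
  -- identify the first filter with the D filter
  have hDE : ((posFinset R).erase α).filter (fun β => α - β ∈ R.pos)
      = (posFinset R).filter (fun β => α - β ∈ R.pos) := by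
    ext β
    simp only [Finset.mem_filter, Finset.mem_erase]
    constructor
    · rintro ⟨⟨_, h1⟩, h2⟩; exact ⟨h1, h2⟩
    · rintro ⟨h1, h2⟩
      refine ⟨⟨?_, h1⟩, h2⟩
      rintro rfl
      rw [sub_self] at h2
      exact R.ne_zero 0 h2.1 rfl
  rw [hDE] at htot
  -- sum over decompositions: each term is 1
  have hD1 : ∑ β ∈ (posFinset R).filter (fun β => α - β ∈ R.pos), 2 * ⟪β, α⟫_ℝ / c
      = (((posFinset R).filter (fun β => α - β ∈ R.pos)).card : ℝ) := by
    rw [Finset.sum_congr rfl (fun β hβ => ?_), Finset.sum_const, nsmul_eq_mul, mul_one]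
    rw [Finset.mem_filter, mem_posFinset] at hβ
    obtain ⟨hβp, hq⟩ := hβ
    have hsum : β + (α - β) ∈ R.roots := by rwa [add_sub_cancel]
    have h1 := nR_of_add_root R hc hc0 hβp.1 hq.1 hsum
    have hsplit : ⟪β, α⟫_ℝ = ⟪β, β⟫_ℝ + ⟪β, α - β⟫_ℝ := by
      rw [← inner_add_right, add_sub_cancel]
    rw [div_eq_one_iff_eq (ne_of_gt hc0)]
    rw [div_eq_iff (ne_of_gt hc0)] at h1
    rw [hsplit, hc β hβp.1]
    linarith
  -- sum over the rest is zero
  have hE0 : ∑ β ∈ ((posFinset R).erase α).filter (fun β => ¬ α - β ∈ R.pos),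
      2 * ⟪β, α⟫_ℝ / c = 0 := by
    apply Finset.sum_involution (g := fun β _ => β - ⌊2 * ⟪β, α⟫_ℝ / c⌋ • α)
    · intro β hβ
      rw [Finset.mem_filter, Finset.mem_erase, mem_posFinset] at hβ
      have hm := nR_floor R hc hc0 hβ.1.2.1 hαr
      rw [nR_sub_zsmul R hc hc0 hαr, hm]
      ring
    · intro β hβ hf0 hgβ
      rw [Finset.mem_filter, Finset.mem_erase, mem_posFinset] at hβ
      have hm := nR_floor R hc hc0 hβ.1.2.1 hαr
      have h0 : (⌊2 * ⟪β, α⟫_ℝ / c⌋ : ℤ) • α = 0 := sub_eq_self.mp hgβ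
      rw [← Int.cast_smul_eq_zsmul ℝ] at h0
      rcases smul_eq_zero.mp h0 with h | h
      · rw [← hm, h] at hf0; simp at hf0
      · exact R.ne_zero α hαr h
    · intro β hβ
      rw [Finset.mem_filter, Finset.mem_erase, mem_posFinset] at hβ
      obtain ⟨⟨hβα, hβp⟩, hnp⟩ := hβ
      obtain ⟨h1, h2, h3⟩ := key_g R hc hc0 hα hβp hβα hnp
      rw [Finset.mem_filter, Finset.mem_erase, mem_posFinset]
      exact ⟨⟨h2, h1⟩, h3⟩
    · intro β hβ
      rw [Finset.mem_filter, Finset.mem_erase, mem_posFinset] at hβ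
      have hm := nR_floor R hc hc0 hβ.1.2.1 hαr
      set m := ⌊2 * ⟪β, α⟫_ℝ / c⌋ with hmdef
      have hfl : ⌊2 * ⟪β - m • α, α⟫_ℝ / c⌋ = -m := by
        have hval : 2 * ⟪β - m • α, α⟫_ℝ / c = ((-m : ℤ) : ℝ) := by
          rw [nR_sub_zsmul R hc hc0 hαr]
          push_cast
          linarith [hm]
        rw [hval, Int.floor_intCast]
      rw [hfl, neg_smul, sub_neg_eq_add, sub_add_cancel]
  rw [hD1, hE0, add_zero] at htot
  linarith

end RSAux
end Aux4

attribute [local instance] Classical.propDecidable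

/-- In a root system of type `A`, `D` or `E` (i.e. all roots have the same length), the
number `s(α)` of unordered representations of a positive root `α` as a sum of two positive
roots equals `ht(α) - 1`. -/
theorem numDecomp_eq_height_sub_one_of_simplyLaced
    {V : Type} [NormedAddCommGroup V] [InnerProductSpace ℝ V]
    (R : RootSystemData V)
    (hADE : ∀ α ∈ R.roots, ∀ β ∈ R.roots, ‖α‖ = ‖β‖) :
    ∀ α ∈ R.pos, (R.numDecomp α : ℤ) = R.height α - 1 := by
  intro α hα
  have hαr := hα.1
  set c : ℝ := ⟪α, α⟫_ℝ with hcdef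
  have hc : ∀ β ∈ R.roots, ⟪β, β⟫_ℝ = c := by
    intro β hβ
    rw [hcdef, real_inner_self_eq_norm_sq, real_inner_self_eq_norm_sq, hADE β hβ α hαr]
  have hc0 : 0 < c := by
    rw [hcdef, real_inner_self_eq_norm_sq]
    have : ‖α‖ ≠ 0 := norm_ne_zero_iff.2 (R.ne_zero α hαr)
    positivity
  set D : Finset V := (RSAux.posFinset R).filter (fun β => α - β ∈ R.pos) with hDdef
  have hcard : (D.card : ℝ) = 2 * (R.height α : ℝ) - 2 :=
    RSAux.card_decomp R hc hc0 hα
  set q : V → Sym2 V := fun β => Sym2.mk β (α - β) with hqdef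
  -- the decomposition set equals the image of `D` under `q`
  have hS : {z : Sym2 V | ∃ β ∈ R.pos, ∃ γ ∈ R.pos, z = Sym2.mk β γ ∧ β + γ = α}
      = ↑(D.image q) := by
    ext z
    simp only [Set.mem_setOf_eq, Finset.coe_image, Set.mem_image, Finset.mem_coe, hDdef,
      Finset.mem_filter, RSAux.mem_posFinset]
    constructor
    · rintro ⟨β, hβ, γ, hγ, rfl, hsum⟩
      have hγe : α - β = γ := by rw [← hsum]; abel
      exact ⟨β, ⟨hβ, hγe ▸ hγ⟩, by rw [hqdef]; simp only; rw [hγe]⟩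
    · rintro ⟨β, ⟨hβ, hab⟩, rfl⟩
      exact ⟨β, hβ, α - β, hab, rfl, by abel⟩
  have hnum : R.numDecomp α = (D.image q).card := by
    rw [RootSystemData.numDecomp, hS, Set.ncard_coe_finset]
  -- each fiber of `q` on `D` has exactly two elements
  have hfiber : ∀ z ∈ D.image q, (D.filter fun a => q a = z).card = 2 := by
    intro z hz
    rw [Finset.mem_image] at hz
    obtain ⟨β₀, hβ₀D, rfl⟩ := hz
    have hβ₀ := hβ₀D
    rw [hDdef, Finset.mem_filter, RSAux.mem_posFinset] at hβ₀
    obtain ⟨hβ₀p, hβ₀q⟩ := hβ₀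
    have hne2 : β₀ ≠ α - β₀ := by
      intro h
      have h2 : α = β₀ + β₀ := sub_eq_iff_eq_add.mp h.symm
      have h3 : (2 : ℝ) • β₀ = α := by rw [two_smul]; exact h2.symm
      exact R.reduced β₀ hβ₀p.1 (h3 ▸ hαr)
    have h1 : D.filter (fun a => q a = q β₀) = {β₀, α - β₀} := by
      ext a
      simp only [Finset.mem_filter, Finset.mem_insert, Finset.mem_singleton]
      constructor
      · rintro ⟨haD, hq⟩
        rcases Sym2.eq_iff.mp (show Sym2.mk a (α - a) = Sym2.mk β₀ (α - β₀) from hq) with ⟨h, _⟩ | ⟨h, _⟩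
        · exact Or.inl h
        · exact Or.inr h
      · rintro (rfl | rfl)
        · exact ⟨hβ₀D, rfl⟩
        · refine ⟨?_, ?_⟩
          · rw [hDdef, Finset.mem_filter, RSAux.mem_posFinset]
            refine ⟨hβ₀q, ?_⟩
            rw [sub_sub_cancel]
            exact hβ₀p
          · rw [hqdef]
            simp only
            rw [sub_sub_cancel]
            exact Sym2.eq_swap
    rw [h1]
    exact Finset.card_pair hne2
  have hD2 : D.card = 2 * (D.image q).card := by
    rw [Finset.card_eq_sum_card_image q D, Finset.sum_congr rfl hfiber,
      Finset.sum_const, smul_eq_mul, mul_comm]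
  have hfin : ((2 : ℤ) * ((D.image q).card : ℤ) : ℝ) = ((2 * R.height α - 2 : ℤ) : ℝ) := by
    push_cast
    push_cast at hcard
    rw [← Nat.cast_ofNat (n := 2), ← Nat.cast_mul, ← hD2]
    push_cast
    linarith
  have hfin2 : (2 : ℤ) * ((D.image q).card : ℤ) = 2 * R.height α - 2 := by
    exact_mod_cast hfin
  rw [hnum]
  omega
end

section
/- Let $\Delta$ be a root system with positive roots $\Delta_+$ and simple roots $\Pi$. For $\alpha \in \Delta_+$, let $s(\alpha)$ be the number of unordered representations of $\alpha$ as a sum of two positive roots, and let $\mathrm{Supp}(\alpha) \subset \Pi$ be the set of simple roots occurring with positive coefficient in $\alpha$. Then $s(\alpha) \ge |\mathrm{Supp}(\alpha)| - 1$. -/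
open scoped InnerProductSpace

namespace RootSystemData

variable {V : Type} [NormedAddCommGroup V] [InnerProductSpace ℝ V] (R : RootSystemData V)

lemma sum_cast_smul (c : V → ℤ) :
    ∑ γ ∈ R.simples, ((c γ : ℝ)) • γ = ∑ γ ∈ R.simples, c γ • γ :=
  Finset.sum_congr rfl fun γ _ => Int.cast_smul_eq_zsmul ℝ _ _

lemma coeff_unique {α : V} (hα : α ∈ R.roots) (c : V → ℤ)
    (h : α = ∑ γ ∈ R.simples, (c γ : ℝ) • γ) : ∀ γ ∈ R.simples, R.coeff α γ = c γ := by
  have hspec := R.coeff_spec α hα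
  have h0 : ∑ γ : R.simples, (((R.coeff α γ - c γ : ℤ)) : ℝ) • (γ : V) = 0 := by
    push_cast
    simp only [sub_smul, Finset.sum_sub_distrib]
    rw [Finset.sum_coe_sort (f := fun γ => ((R.coeff α γ : ℝ)) • γ),
        Finset.sum_coe_sort (f := fun γ => ((c γ : ℝ)) • γ)]
    rw [← h, R.sum_cast_smul, ← hspec, sub_self]
  have hli := linearIndependent_iff'.mp R.simples_indep Finset.univ
      (fun γ => ((R.coeff α (γ:V) - c (γ:V) : ℤ) : ℝ)) h0
  intro γ hγ
  have h2 : ((R.coeff α γ - c γ : ℤ) : ℝ) = 0 := hli ⟨γ, hγ⟩ (Finset.mem_univ _)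
  have h3 : (R.coeff α γ - c γ : ℤ) = 0 := by exact_mod_cast h2
  omega


open scoped Classical

lemma inner_self_pos' {α : V} (hα : α ∈ R.roots) : 0 < ⟪α, α⟫_ℝ :=
  lt_of_le_of_ne real_inner_self_nonneg
    (Ne.symm fun h => R.ne_zero α hα (inner_self_eq_zero.mp h))

lemma coeff_simple {γ : V} (hγ : γ ∈ R.simples) :
    ∀ γ' ∈ R.simples, R.coeff γ γ' = if γ' = γ then 1 else 0 := by
  apply R.coeff_unique (R.simples_mem γ hγ)
  push_cast
  simp [ite_smul, Finset.sum_ite_eq', hγ]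

lemma pos_of_coeff_pos {α γ0 : V} (hα : α ∈ R.roots) (hγ0 : γ0 ∈ R.simples)
    (h : 0 < R.coeff α γ0) : α ∈ R.pos := by
  rcases R.coeff_sign α hα with hs | hs
  · exact ⟨hα, hs⟩
  · exact absurd (hs γ0 hγ0) (by omega)

lemma coeff_neg {α : V} (hα : α ∈ R.roots) :
    ∀ γ ∈ R.simples, R.coeff (-α) γ = -R.coeff α γ := by
  apply R.coeff_unique (R.neg_mem α hα)
  push_cast
  simp only [neg_smul]
  rw [Finset.sum_neg_distrib, R.sum_cast_smul (c := fun γ => R.coeff α γ), ← R.coeff_spec α hα]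

lemma neg_simple_not_pos {γ : V} (hγ : γ ∈ R.simples) : -γ ∉ R.pos := by
  rintro ⟨-, h⟩
  have h1 := h γ hγ
  rw [R.coeff_neg (R.simples_mem γ hγ) γ hγ, R.coeff_simple hγ γ hγ] at h1
  simp at h1

lemma coeff_add {β δ α : V} (hβ : β ∈ R.roots) (hδ : δ ∈ R.roots) (hα : α ∈ R.roots)
    (h : β + δ = α) : ∀ γ ∈ R.simples, R.coeff α γ = R.coeff β γ + R.coeff δ γ := by
  apply R.coeff_unique hα
  push_cast
  simp only [add_smul, Finset.sum_add_distrib]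
  rw [R.sum_cast_smul (c := fun γ => R.coeff β γ), R.sum_cast_smul (c := fun γ => R.coeff δ γ),
    ← R.coeff_spec β hβ, ← R.coeff_spec δ hδ, h]

lemma sub_mem_of_inner_pos {α β : V} (hα : α ∈ R.roots) (hβ : β ∈ R.roots)
    (hip : 0 < ⟪α, β⟫_ℝ) (hne : α ≠ β) : α - β ∈ R.roots := by
  obtain ⟨n, hn⟩ := R.cartan_int β hβ α hα
  obtain ⟨m, hm⟩ := R.cartan_int α hα β hβ
  have ha : 0 < ⟪α,α⟫_ℝ := R.inner_self_pos' hα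
  have hb : 0 < ⟪β,β⟫_ℝ := R.inner_self_pos' hβ
  have hsymm : ⟪β,α⟫_ℝ = ⟪α,β⟫_ℝ := real_inner_comm α β
  have hn1 : 1 ≤ n := by
    have : (0:ℝ) < n := by rw [← hn, hsymm]; positivity
    exact_mod_cast this
  have hm1 : 1 ≤ m := by
    have : (0:ℝ) < m := by rw [← hm]; positivity
    exact_mod_cast this
  by_cases h1 : n = 1
  · have h := R.reflect_mem β hβ α hα
    rw [hn, h1] at h
    simpa using h
  by_cases h2 : m = 1
  · have h := R.reflect_mem α hα β hβ
    rw [hm, h2] at h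
    simp only [Int.cast_one, one_smul] at h
    have := R.neg_mem _ h
    simpa using this
  exfalso
  have hCS : ⟪α,β⟫_ℝ * ⟪α,β⟫_ℝ ≤ ⟪α,α⟫_ℝ * ⟪β,β⟫_ℝ := real_inner_mul_inner_self_le α β
  have hnm : (n:ℝ) * m ≤ 4 := by
    rw [← hn, ← hm, hsymm, div_mul_div_comm, div_le_iff₀ (by positivity)]
    nlinarith
  have hnm' : n * m ≤ 4 := by exact_mod_cast hnm
  have hn2 : 2 ≤ n := by omega
  have hm2 : 2 ≤ m := by omega
  have he : n = 2 ∧ m = 2 := by constructor <;> nlinarith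
  have hpb : ⟪α,β⟫_ℝ = ⟪β,β⟫_ℝ := by
    have h := hn; rw [he.1] at h; push_cast at h
    rw [hsymm, div_eq_iff (by positivity)] at h; linarith
  have hpa : ⟪α,β⟫_ℝ = ⟪α,α⟫_ℝ := by
    have h := hm; rw [he.2] at h; push_cast at h
    rw [div_eq_iff (by positivity)] at h; linarith
  have hz : ⟪α - β, α - β⟫_ℝ = 0 := by
    rw [inner_sub_sub_self]
    linarith
  exact hne (sub_eq_zero.mp (inner_self_eq_zero.mp hz))


/-- Reflection in the hyperplane orthogonal to `γ`. -/
noncomputable def rf (γ x : V) : V := x - (2 * ⟪γ, x⟫_ℝ / ⟪γ, γ⟫_ℝ) • γ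

lemma rf_mem {γ x : V} (hγ : γ ∈ R.roots) (hx : x ∈ R.roots) : rf γ x ∈ R.roots :=
  R.reflect_mem γ hγ x hx

lemma rf_add (γ x y : V) : rf γ (x + y) = rf γ x + rf γ y := by
  simp only [rf, inner_add_right, add_div, mul_add, add_smul]
  abel

lemma inner_rf (γ x : V) (hb : ⟪γ, γ⟫_ℝ ≠ 0) : ⟪γ, rf γ x⟫_ℝ = -⟪γ, x⟫_ℝ := by
  simp only [rf, inner_sub_right, real_inner_smul_right]
  rw [div_mul_cancel₀ _ hb]
  ring

lemma rf_invol (γ x : V) (hb : ⟪γ, γ⟫_ℝ ≠ 0) : rf γ (rf γ x) = x := by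
  conv_lhs => rw [rf, inner_rf γ x hb]
  have h : 2 * -⟪γ,x⟫_ℝ / ⟪γ,γ⟫_ℝ = -(2 * ⟪γ,x⟫_ℝ / ⟪γ,γ⟫_ℝ) := by ring
  rw [h, neg_smul, sub_neg_eq_add, rf, sub_add_cancel]

lemma rf_self (γ : V) (hb : ⟪γ, γ⟫_ℝ ≠ 0) : rf γ γ = -γ := by
  rw [rf, mul_div_assoc, div_self hb, mul_one]
  rw [show (2:ℝ) • γ = γ + γ by rw [two_smul]]
  abel

lemma coeff_rf {γ : V} (hγs : γ ∈ R.simples) {δ : V} (hδ : δ ∈ R.roots) {c : ℤ}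
    (hc : (c:ℝ) = 2 * ⟪γ, δ⟫_ℝ / ⟪γ, γ⟫_ℝ) :
    ∀ γ' ∈ R.simples, R.coeff (rf γ δ) γ' = R.coeff δ γ' - c * (if γ' = γ then 1 else 0) := by
  apply R.coeff_unique (R.rf_mem (R.simples_mem γ hγs) hδ)
  push_cast
  simp only [sub_smul, Finset.sum_sub_distrib]
  rw [R.sum_cast_smul (c := fun γ' => R.coeff δ γ'), ← R.coeff_spec δ hδ]
  rw [rf, ← hc]
  congr 1
  simp [mul_ite, ite_smul, Finset.sum_ite_eq', hγs]


lemma eq_simple_of_supp_single {γ δ : V} (hγs : γ ∈ R.simples) (hδ : δ ∈ R.pos)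
    (h : ∀ γ' ∈ R.simples, γ' ≠ γ → R.coeff δ γ' = 0) : δ = γ := by
  have hδr := hδ.1
  have hb : 0 < ⟪γ,γ⟫_ℝ := R.inner_self_pos' (R.simples_mem γ hγs)
  set k := R.coeff δ γ with hk
  have hδeq : δ = (k:ℝ) • γ := by
    have := R.coeff_spec δ hδr
    rw [Finset.sum_eq_single_of_mem γ hγs (fun γ' h' hne => by rw [h γ' h' hne, zero_smul])]
      at this
    rw [this, Int.cast_smul_eq_zsmul]
  have hk0 : 0 ≤ k := hδ.2 γ hγs
  have hkne : k ≠ 0 := by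
    intro h0
    rw [h0] at hδeq
    exact R.ne_zero δ hδr (by simpa using hδeq)
  by_cases hk1 : k = 1
  · rw [hδeq, hk1]; simp
  have hk2 : 2 ≤ k := by omega
  exfalso
  obtain ⟨n, hn⟩ := R.cartan_int δ hδr γ (R.simples_mem γ hγs)
  have hiδγ : ⟪δ, γ⟫_ℝ = (k:ℝ) * ⟪γ,γ⟫_ℝ := by rw [hδeq, real_inner_smul_left]
  have hiδδ : ⟪δ, δ⟫_ℝ = (k:ℝ)^2 * ⟪γ,γ⟫_ℝ := by
    rw [hδeq, real_inner_smul_left, real_inner_smul_right]; ring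
  have hkr : (0:ℝ) < (k:ℝ) := by exact_mod_cast (by omega : (0:ℤ) < k)
  have hnk : (n:ℝ) * k = 2 := by
    rw [← hn, hiδγ, hiδδ]
    field_simp
  have hnkz : n * k = 2 := by exact_mod_cast hnk
  have hn1 : n = 1 := by nlinarith [hnkz, hk2]
  rw [hn1, one_mul] at hnkz
  have := R.reduced γ (R.simples_mem γ hγs)
  apply this
  rw [show (2:ℝ) • γ = δ by rw [hδeq, hnkz]; norm_num]
  exact hδr

lemma rf_pos {γ δ : V} (hγs : γ ∈ R.simples) (hδ : δ ∈ R.pos) (hne : δ ≠ γ) :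
    rf γ δ ∈ R.pos := by
  obtain ⟨c, hc⟩ := R.cartan_int γ (R.simples_mem γ hγs) δ hδ.1
  have hcoeff := R.coeff_rf hγs hδ.1 hc.symm
  by_cases h : ∃ γ'' ∈ R.simples, γ'' ≠ γ ∧ 0 < R.coeff δ γ''
  · obtain ⟨γ'', hγ''s, hγ''ne, hγ''pos⟩ := h
    apply R.pos_of_coeff_pos (R.rf_mem (R.simples_mem γ hγs) hδ.1) hγ''s
    rw [hcoeff γ'' hγ''s, if_neg hγ''ne]
    omega
  · exfalso
    push_neg at h
    exact hne (R.eq_simple_of_supp_single hγs hδ fun γ' h' hne' => by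
      have := hδ.2 γ' h'
      have := h γ' h' hne'
      omega)

lemma exists_simple_inner_pos {α : V} (hα : α ∈ R.pos) :
    ∃ γ ∈ R.simples, 0 < R.coeff α γ ∧ 0 < ⟪γ, α⟫_ℝ := by
  by_contra hcon
  push_neg at hcon
  have hs : α = ∑ γ ∈ R.simples, ((R.coeff α γ : ℝ)) • γ := by
    rw [R.sum_cast_smul (c := fun γ => R.coeff α γ)]; exact R.coeff_spec α hα.1
  have heq : ⟪α, α⟫_ℝ = ∑ γ ∈ R.simples, ((R.coeff α γ : ℝ)) * ⟪γ, α⟫_ℝ := by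
    nth_rewrite 1 [hs]
    rw [sum_inner]
    exact Finset.sum_congr rfl fun γ _ => real_inner_smul_left _ _ _
  have hle : ⟪α, α⟫_ℝ ≤ 0 := by
    rw [heq]
    apply Finset.sum_nonpos
    intro γ hγ
    rcases eq_or_lt_of_le (hα.2 γ hγ) with h0 | hpos
    · rw [← h0]; simp
    · have := hcon γ hγ hpos
      have hc : (0:ℝ) < (R.coeff α γ : ℝ) := by exact_mod_cast hpos
      nlinarith
  exact absurd (R.inner_self_pos' hα.1) (by linarith)


/-- The set of unordered decompositions of `α` into two positive roots. -/
def DSet (R : RootSystemData V) (α : V) : Set (Sym2 V) :=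
  {z : Sym2 V | ∃ β ∈ R.pos, ∃ γ ∈ R.pos, z = Sym2.mk β γ ∧ β + γ = α}

lemma numDecomp_eq (α : V) : R.numDecomp α = (R.DSet α).ncard := rfl

lemma DSet_finite (α : V) : (R.DSet α).Finite := by
  apply Set.Finite.subset ((R.finite.prod R.finite).image (fun p : V × V => Sym2.mk p.1 p.2))
  rintro z ⟨β, hβ, δ, hδ, rfl, -⟩
  exact ⟨(β, δ), ⟨hβ.1, hδ.1⟩, rfl⟩

lemma rf_ne_simple {γ δ : V} (hγs : γ ∈ R.simples) (hδ : δ ∈ R.pos) : rf γ δ ≠ γ := by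
  intro h
  have hb := R.inner_self_pos' (R.simples_mem γ hγs)
  have hδγ : δ = -γ := by
    rw [← rf_invol γ δ hb.ne', h, rf_self γ hb.ne']
  exact R.neg_simple_not_pos hγs (hδγ ▸ hδ)

lemma mem_DSet_of_gamma {α γ : V} {z : Sym2 V} (hz : z ∈ R.DSet α) (hγz : γ ∈ z) :
    z = Sym2.mk γ (α - γ) ∧ α - γ ∈ R.pos := by
  obtain ⟨β, hβ, δ, hδ, rfl, hsum⟩ := hz
  rw [Sym2.mem_iff] at hγz
  rcases hγz with rfl | rfl
  · constructor
    · rw [show α - γ = δ by rw [← hsum]; abel]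
    · rw [show α - γ = δ by rw [← hsum]; abel]; exact hδ
  · constructor
    · rw [show α - γ = β by rw [← hsum]; abel]; exact Sym2.eq_swap
    · rw [show α - γ = β by rw [← hsum]; abel]; exact hβ


end RootSystemData

open RootSystemData in
/-- In any reduced root system, the number `s(α)` of unordered representations of a
positive root `α` as a sum of two positive roots satisfies `s(α) ≥ |Supp α| - 1`. -/
theorem card_supp_sub_one_le_numDecomp
    {V : Type} [NormedAddCommGroup V] [InnerProductSpace ℝ V]
    (R : RootSystemData V) :
    ∀ α ∈ R.pos, ((R.Supp α).card : ℤ) - 1 ≤ (R.numDecomp α : ℤ) := by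
  classical
  suffices H : ∀ N : ℕ, ∀ α ∈ R.pos, (R.height α).toNat ≤ N →
      ((R.Supp α).card : ℤ) - 1 ≤ (R.numDecomp α : ℤ) by
    exact fun α hα => H (R.height α).toNat α hα le_rfl
  intro N
  induction N with
  | zero =>
    intro α hα _
    by_cases hc : (R.Supp α).card ≤ 1
    · have h0 : (0:ℤ) ≤ (R.numDecomp α : ℤ) := Int.ofNat_nonneg _
      have h1 : ((R.Supp α).card : ℤ) ≤ 1 := by exact_mod_cast hc
      omega
    ·
      -- handle uniformly below using the same trivial bound is impossible, so do the hard work: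
      -- but height.toNat = 0 means height ≤ 0; card ≤ height; contradiction
      exfalso
      apply hc
      have hle : ((R.Supp α).card : ℤ) ≤ R.height α := by
        calc ((R.Supp α).card : ℤ) = ∑ _γ ∈ R.Supp α, (1:ℤ) := by simp
        _ ≤ ∑ γ ∈ R.Supp α, R.coeff α γ := by
            apply Finset.sum_le_sum
            intro γ hγ
            have h1 := (Finset.mem_filter.mp hγ).2
            have h2 := hα.2 γ (Finset.mem_filter.mp hγ).1
            omega
        _ ≤ R.height α := Finset.sum_le_sum_of_subset_of_nonneg (Finset.filter_subset _ _)
            (fun γ hγ _ => hα.2 γ hγ)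
      have hh0 : (R.height α).toNat ≤ 0 := by assumption
      omega
  | succ N ih =>
    intro α hα hht
    by_cases hcard : (R.Supp α).card ≤ 1
    · have h0 : (0:ℤ) ≤ (R.numDecomp α : ℤ) := Int.ofNat_nonneg _
      have h1 : ((R.Supp α).card : ℤ) ≤ 1 := by exact_mod_cast hcard
      omega
    push_neg at hcard
    obtain ⟨γ, hγs, hcγ, hip⟩ := R.exists_simple_inner_pos hα
    have hγr := R.simples_mem γ hγs
    have hb := R.inner_self_pos' hγr
    have hγSupp : γ ∈ R.Supp α := Finset.mem_filter.mpr ⟨hγs, by omega⟩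
    obtain ⟨γ'', hγ''Supp, hγ''ne⟩ := Finset.exists_mem_ne hcard γ
    have hγ''s : γ'' ∈ R.simples := (Finset.mem_filter.mp hγ''Supp).1
    have hγ''c : R.coeff α γ'' ≠ 0 := (Finset.mem_filter.mp hγ''Supp).2
    have hγ''pos : 0 < R.coeff α γ'' := lt_of_le_of_ne (hα.2 γ'' hγ''s) (Ne.symm hγ''c)
    have hαγ : α ≠ γ := by
      rintro rfl
      rw [R.coeff_simple hγs γ'' hγ''s, if_neg hγ''ne] at hγ''c
      exact hγ''c rfl
    have hγpos : γ ∈ R.pos :=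
      R.pos_of_coeff_pos hγr hγs (by rw [R.coeff_simple hγs γ hγs]; simp)
    have hsubr : α - γ ∈ R.roots :=
      R.sub_mem_of_inner_pos hα.1 hγr (by rw [← real_inner_comm α γ]; exact hip) hαγ
    have hsubcoeff : ∀ γ' ∈ R.simples,
        R.coeff (α - γ) γ' = R.coeff α γ' - (if γ' = γ then 1 else 0) := by
      intro γ' h'
      have h1 := R.coeff_add hsubr hγr hα.1 (by abel) γ' h'
      rw [R.coeff_simple hγs γ' h'] at h1
      omega
    have hsubpos : α - γ ∈ R.pos := by
      apply R.pos_of_coeff_pos hsubr hγ''s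
      rw [hsubcoeff γ'' hγ''s, if_neg hγ''ne]
      omega
    obtain ⟨c, hc⟩ := R.cartan_int γ hγr α hα.1
    have hc1 : 1 ≤ c := by
      have : (0:ℝ) < c := by rw [← hc]; positivity
      exact_mod_cast this
    have hα' : rf γ α ∈ R.pos := R.rf_pos hγs hα hαγ
    have hcoeff' := R.coeff_rf hγs hα.1 hc.symm
    have hcγ' : R.coeff (rf γ α) γ = R.coeff α γ - c := by
      rw [hcoeff' γ hγs, if_pos rfl]; ring
    have hcne' : ∀ γ' ∈ R.simples, γ' ≠ γ → R.coeff (rf γ α) γ' = R.coeff α γ' := by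
      intro γ' h' hne; rw [hcoeff' γ' h', if_neg hne]; ring
    have hcc : c ≤ R.coeff α γ := by have := hα'.2 γ hγs; omega
    have hht' : (R.height (rf γ α)).toNat ≤ N := by
      have hite : ∑ γ' ∈ R.simples, (c * if γ' = γ then 1 else 0) = c := by
        simp [mul_ite, Finset.sum_ite_eq', hγs]
      have hhd : R.height (rf γ α) = R.height α - c := by
        unfold RootSystemData.height
        rw [Finset.sum_congr rfl hcoeff', Finset.sum_sub_distrib, hite]
      have hnn : 0 ≤ R.height (rf γ α) := Finset.sum_nonneg fun γ' h' => hα'.2 γ' h'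
      omega
    have hIH := ih (rf γ α) hα' hht'
    set g : Sym2 V → Sym2 V :=
      fun z => if γ ∈ z then Sym2.mk γ (α - γ) else z.map (rf γ) with hg
    have hrfinj : ∀ x y : V, rf γ x = rf γ y → x = y := by
      intro x y h
      rw [← rf_invol γ x hb.ne', h, rf_invol γ y hb.ne']
    have hmaps : ∀ z ∈ R.DSet (rf γ α), g z ∈ R.DSet α := by
      intro z hz
      by_cases hm : γ ∈ z
      · simp only [hg, if_pos hm]
        exact ⟨γ, hγpos, α - γ, hsubpos, rfl, by abel⟩
      · obtain ⟨β, hβ, δ, hδ, rfl, hsum⟩ := hz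
        have hm' := hm
        rw [Sym2.mem_iff] at hm'
        push_neg at hm'
        simp only [hg, if_neg hm, Sym2.map_pair_eq]
        refine ⟨rf γ β, R.rf_pos hγs hβ (Ne.symm hm'.1), rf γ δ,
          R.rf_pos hγs hδ (Ne.symm hm'.2), rfl, ?_⟩
        rw [← rf_add, hsum, rf_invol γ α hb.ne']
    have hinj : Set.InjOn g (R.DSet (rf γ α)) := by
      intro z1 h1 z2 h2 heq
      by_cases m1 : γ ∈ z1 <;> by_cases m2 : γ ∈ z2
      · rw [(R.mem_DSet_of_gamma h1 m1).1, (R.mem_DSet_of_gamma h2 m2).1]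
      · exfalso
        simp only [hg, if_pos m1, if_neg m2] at heq
        obtain ⟨β, hβ, δ, hδ, rfl, hsum⟩ := h2
        rw [Sym2.map_pair_eq] at heq
        have hγmem : γ ∈ Sym2.mk (rf γ β) (rf γ δ) := by
          rw [← heq]; exact Sym2.mem_mk_left γ (α - γ)
        rcases Sym2.mem_iff.mp hγmem with h | h
        · exact R.rf_ne_simple hγs hβ h.symm
        · exact R.rf_ne_simple hγs hδ h.symm
      · exfalso
        simp only [hg, if_neg m1, if_pos m2] at heq
        obtain ⟨β, hβ, δ, hδ, rfl, hsum⟩ := h1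
        rw [Sym2.map_pair_eq] at heq
        have hγmem : γ ∈ Sym2.mk (rf γ β) (rf γ δ) := by
          rw [heq]; exact Sym2.mem_mk_left γ (α - γ)
        rcases Sym2.mem_iff.mp hγmem with h | h
        · exact R.rf_ne_simple hγs hβ h.symm
        · exact R.rf_ne_simple hγs hδ h.symm
      · obtain ⟨β1, hβ1, δ1, hδ1, rfl, hs1⟩ := h1
        obtain ⟨β2, hβ2, δ2, hδ2, rfl, hs2⟩ := h2
        simp only [hg, if_neg m1, if_neg m2, Sym2.map_pair_eq] at heq
        rcases Sym2.eq_iff.mp heq with ⟨ha, hb'⟩ | ⟨ha, hb'⟩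
        · rw [hrfinj _ _ ha, hrfinj _ _ hb']
        · rw [hrfinj _ _ ha, hrfinj _ _ hb']; exact Sym2.eq_swap
    have hfinα := R.DSet_finite α
    have hfinα' := R.DSet_finite (rf γ α)
    rw [R.numDecomp_eq] at hIH ⊢
    rcases lt_or_eq_of_le hcc with hlt | heqc
    · have hsupp : R.Supp (rf γ α) = R.Supp α := by
        apply Finset.filter_congr
        intro γ' h'
        by_cases hne : γ' = γ
        · subst hne
          rw [hcγ']
          constructor <;> intro <;> omega
        · rw [hcne' γ' h' hne]
      have hle1 : (R.DSet (rf γ α)).ncard ≤ (R.DSet α).ncard := by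
        rw [← Set.ncard_image_of_injOn hinj]
        exact Set.ncard_le_ncard (Set.image_subset_iff.mpr hmaps) hfinα
      rw [← hsupp]
      omega
    · have hnoγ : ∀ z ∈ R.DSet (rf γ α), γ ∉ z := by
        rintro z ⟨β, hβ, δ, hδ, rfl, hsum⟩ hm
        have hadd := R.coeff_add hβ.1 hδ.1 hα'.1 hsum γ hγs
        have h0 : R.coeff (rf γ α) γ = 0 := by omega
        have hβ0 := hβ.2 γ hγs
        have hδ0 := hδ.2 γ hγs
        rcases Sym2.mem_iff.mp hm with rfl | rfl
        · rw [R.coeff_simple hγs γ hγs, if_pos rfl] at hadd; omega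
        · rw [R.coeff_simple hγs γ hγs, if_pos rfl] at hadd; omega
      have hx0 : Sym2.mk γ (α - γ) ∈ R.DSet α := ⟨γ, hγpos, α - γ, hsubpos, rfl, by abel⟩
      have hx0ni : Sym2.mk γ (α - γ) ∉ g '' R.DSet (rf γ α) := by
        rintro ⟨z, hz, hgz⟩
        have hm := hnoγ z hz
        simp only [hg, if_neg hm] at hgz
        obtain ⟨β, hβ, δ, hδ, rfl, hsum⟩ := hz
        rw [Sym2.map_pair_eq] at hgz
        have hγmem : γ ∈ Sym2.mk (rf γ β) (rf γ δ) := by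
          rw [hgz]; exact Sym2.mem_mk_left γ (α - γ)
        rcases Sym2.mem_iff.mp hγmem with h | h
        · exact R.rf_ne_simple hγs hβ h.symm
        · exact R.rf_ne_simple hγs hδ h.symm
      have hsupp : R.Supp (rf γ α) = (R.Supp α).erase γ := by
        ext γ'
        simp only [Finset.mem_erase, RootSystemData.Supp, Finset.mem_filter]
        constructor
        · rintro ⟨h', hne0⟩
          by_cases hne : γ' = γ
          · subst hne; rw [hcγ'] at hne0; omega
          · exact ⟨hne, h', by rwa [← hcne' γ' h' hne]⟩
        · rintro ⟨hne, h', hne0⟩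
          exact ⟨h', by rwa [hcne' γ' h' hne]⟩
      have hcarderase : (R.Supp α).card = (R.Supp (rf γ α)).card + 1 := by
        rw [hsupp, Finset.card_erase_of_mem hγSupp]
        have := Finset.card_pos.mpr ⟨γ, hγSupp⟩
        omega
      have hsub2 : insert (Sym2.mk γ (α - γ)) (g '' R.DSet (rf γ α)) ⊆ R.DSet α := by
        rw [Set.insert_subset_iff]
        exact ⟨hx0, Set.image_subset_iff.mpr hmaps⟩
      have hcnt : (R.DSet (rf γ α)).ncard + 1 ≤ (R.DSet α).ncard := by
        have h1 := Set.ncard_le_ncard hsub2 hfinα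
        rw [Set.ncard_insert_of_notMem hx0ni (hfinα'.image g),
          Set.ncard_image_of_injOn hinj] at h1
        exact h1
      omega
end

section
/- Let $H$ be a connected solvable spherical subgroup of $G$ standardly embedded in $B$, and let $\Psi = \{\alpha \in \Delta_+ \mid \mathfrak{g}_\alpha \not\subset \mathfrak{n}\}$ be its set of active roots. If $\alpha, \beta \in \Psi$ and $\gamma = \beta - \alpha \in \Delta_+$, then $\gamma \notin \Psi$. -/
open scoped InnerProductSpace

/-- The Lie-theoretic data attached to a connected solvable subgroup `H = S ⋉ N` of a
connected semisimple complex algebraic group `G`, standardly embedded in a Borel subgroup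
`B = T ⋉ U`:
* the root system of `G` with respect to `T`, with the base determined by `B`;
* the restriction map `τ : 𝔛(T) ⊗ ℚ → 𝔛(S) ⊗ ℚ` of characters from `T` to the maximal
  torus `S = H ∩ T` of `H` (modelled as a linear map of vector spaces, `W = 𝔛(S) ⊗ ℚ`);
* the nilpotent Lie algebra `L = 𝔲` of the maximal unipotent subgroup `U`, with its root
  space decomposition `𝔲 = ⨁_{α ∈ Δ₊} 𝔤_α`;
* the Lie algebra `𝔫 ⊆ 𝔲` of the unipotent radical `N = H ∩ U` of `H`, which is a
  subalgebra and is a sum of its `S`-weight components. -/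
structure SphericalSetup (V : Type) [NormedAddCommGroup V] [InnerProductSpace ℝ V]
    (W : Type) [AddCommGroup W] [Module ℝ W]
    (L : Type) [LieRing L] [LieAlgebra ℂ L] extends RootSystemData V where
  /-- restriction of characters from `T` to `S` -/
  τ : V →ₗ[ℝ] W
  /-- the root spaces `𝔤_α ⊆ 𝔲` -/
  g : V → Submodule ℂ L
  g_dim : ∀ α ∈ toRootSystemData.pos, Module.finrank ℂ (g α) = 1
  g_bot : ∀ α, α ∉ toRootSystemData.pos → g α = ⊥
  g_top : (⨆ α ∈ toRootSystemData.pos, g α) = (⊤ : Submodule ℂ L)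
  bracket_mem : ∀ (α β : V), ∀ x ∈ g α, ∀ y ∈ g β, ⁅x, y⁆ ∈ g (α + β)
  bracket_ne : ∀ α ∈ toRootSystemData.pos, ∀ β ∈ toRootSystemData.pos,
    α + β ∈ toRootSystemData.pos → ∃ x ∈ g α, ∃ y ∈ g β, ⁅x, y⁆ ≠ (0 : L)
  /-- the Lie algebra `𝔫` of the unipotent radical `N` of `H` -/
  n : Submodule ℂ L
  n_bracket : ∀ x ∈ n, ∀ y ∈ n, ⁅x, y⁆ ∈ n
  n_weight : n = ⨆ w : W, n ⊓ ⨆ α ∈ {a ∈ toRootSystemData.pos | τ a = w}, g α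

namespace SphericalSetup

variable {V : Type} [NormedAddCommGroup V] [InnerProductSpace ℝ V]
  {W : Type} [AddCommGroup W] [Module ℝ W]
  {L : Type} [LieRing L] [LieAlgebra ℂ L]

/-- The `S`-weight subspace `𝔲_w ⊆ 𝔲` of weight `w`. -/
def uSp (S : SphericalSetup V W L) (w : W) : Submodule ℂ L :=
  ⨆ α ∈ {a ∈ S.pos | S.τ a = w}, S.g α

/-- `c_w`: the codimension of `𝔫_w = 𝔫 ∩ 𝔲_w` in `𝔲_w`. -/
noncomputable def c (S : SphericalSetup V W L) (w : W) : ℕ :=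
  Module.finrank ℂ (S.uSp w) - Module.finrank ℂ ↥(S.n ⊓ S.uSp w)

/-- The sphericity of `H` in `G`, via the criterion of Theorem `solvable_spherical`:
`c_w ≤ 1` for every weight `w`, and the weights `w` with `c_w = 1` are linearly
independent in `𝔛(S) ⊗ ℚ`. -/
def Spherical (S : SphericalSetup V W L) : Prop :=
  (∀ w : W, S.c w ≤ 1) ∧
    LinearIndependent ℝ (fun w : {w : W // S.c w = 1} => (w : W))

/-- The set `Ψ` of active roots: positive roots `α` with `𝔤_α ⊄ 𝔫`. -/
def active (S : SphericalSetup V W L) : Set V :=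
  {α ∈ S.pos | ¬ S.g α ≤ S.n}

/-- The family `F(α)` of active roots generated by an active root `α`: the root `α`
together with all active roots subordinate to it. -/
def family (S : SphericalSetup V W L) (α : V) : Set V :=
  insert α {β ∈ S.active | α - β ∈ S.pos}

end SphericalSetup

/-- Let `H` be a connected solvable spherical subgroup of `G` standardly embedded in `B`,
with set of active roots `Ψ`.  If `α, β ∈ Ψ` and `γ = β - α` is a positive root, then
`γ ∉ Ψ`. -/
theorem sub_of_active_not_active
    {V : Type} [NormedAddCommGroup V] [InnerProductSpace ℝ V]
    {W : Type} [AddCommGroup W] [Module ℝ W]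
    {L : Type} [LieRing L] [LieAlgebra ℂ L] [FiniteDimensional ℂ L]
    (S : SphericalSetup V W L) (hS : S.Spherical)
    {α β : V} (hα : α ∈ S.active) (hβ : β ∈ S.active) (hγ : β - α ∈ S.pos) :
    β - α ∉ S.active := by
  intro hγa
  -- every active root has weight of codimension exactly 1
  have key : ∀ δ ∈ S.active, S.c (S.τ δ) = 1 := by
    intro δ hδ
    obtain ⟨hδpos, hδn⟩ := hδ
    refine le_antisymm (hS.1 _) ?_
    have hg : S.g δ ≤ S.uSp (S.τ δ) :=
      le_iSup₂_of_le δ (⟨hδpos, rfl⟩ : δ ∈ {a ∈ S.pos | S.τ a = S.τ δ}) le_rfl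
    have hlt : S.n ⊓ S.uSp (S.τ δ) < S.uSp (S.τ δ) := by
      refine lt_of_le_of_ne inf_le_right fun h => ?_
      exact hδn (hg.trans (inf_eq_right.mp h))
    have hfr := Submodule.finrank_lt_finrank_of_lt hlt
    unfold SphericalSetup.c
    omega
  set A : {w : W // S.c w = 1} := ⟨S.τ α, key α hα⟩ with hA
  set B : {w : W // S.c w = 1} := ⟨S.τ β, key β hβ⟩ with hB
  set C : {w : W // S.c w = 1} := ⟨S.τ (β - α), key _ hγa⟩ with hC
  have hrel : S.τ α + S.τ (β - α) = S.τ β := by rw [map_sub]; abel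
  have li := hS.2
  by_cases hAB : A = B
  · have h0 : S.τ (β - α) = 0 := by
      have := congrArg Subtype.val hAB
      simp only [hA, hB] at this
      rw [this] at hrel
      exact add_left_cancel (a := S.τ β) (by rw [add_zero]; exact hrel)
    exact li.ne_zero C h0
  by_cases hCB : C = B
  · have h0 : S.τ α = 0 := by
      have := congrArg Subtype.val hCB
      simp only [hC, hB] at this
      rw [this] at hrel
      have := add_right_cancel (a := S.τ α) (b := S.τ β) (c := (0 : W))
      -- τα + τβ = τβ → τα = 0
      have h' : S.τ α + S.τ β = 0 + S.τ β := by rw [zero_add]; exact hrel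
      exact add_right_cancel h'
    exact li.ne_zero A h0
  by_cases hAC : A = C
  · -- τβ = τα + τα
    have hval : S.τ α = S.τ (β - α) := congrArg Subtype.val hAC
    have h2 : S.τ α + S.τ α = S.τ β := by rw [hval] at hrel ⊢; exact hrel
    set l : {w : W // S.c w = 1} →₀ ℝ :=
      Finsupp.single A 2 - Finsupp.single B 1 with hl
    have hcomb : Finsupp.linearCombination ℝ (fun w : {w : W // S.c w = 1} => (w : W)) l
        = 0 := by
      rw [hl, map_sub, Finsupp.linearCombination_single, Finsupp.linearCombination_single]
      simp only [hA, hB, one_smul]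
      rw [two_smul, h2, sub_self]
    have hl0 : l = 0 := linearIndependent_iff.mp li l hcomb
    have : l A = 2 := by
      rw [hl]
      simp [Finsupp.single_eq_of_ne' (Ne.symm hAB)]
    rw [hl0] at this
    simp at this
  · -- A, B, C pairwise distinct
    set l : {w : W // S.c w = 1} →₀ ℝ :=
      Finsupp.single A 1 + Finsupp.single C 1 - Finsupp.single B 1 with hl
    have hcomb : Finsupp.linearCombination ℝ (fun w : {w : W // S.c w = 1} => (w : W)) l
        = 0 := by
      rw [hl, map_sub, map_add, Finsupp.linearCombination_single,
        Finsupp.linearCombination_single, Finsupp.linearCombination_single]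
      simp only [hA, hB, hC, one_smul]
      rw [hrel, sub_self]
    have hl0 : l = 0 := linearIndependent_iff.mp li l hcomb
    have : l A = 1 := by
      rw [hl]
      simp [Finsupp.single_eq_of_ne' (Ne.symm hAB), Finsupp.single_eq_of_ne' (Ne.symm hAC)]
    rw [hl0] at this
    simp at this
end

section
/- Let $H$ be a connected solvable spherical subgroup of $G$ standardly embedded in $B$, with active roots $\Psi$. If $\alpha$ is an active root and $\alpha = \beta + \gamma$ with $\beta, \gamma \in \Delta_+$, then exactly one of $\beta, \gamma$ is active. -/
open scoped InnerProductSpace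

namespace SphericalSetup

variable {V : Type} [NormedAddCommGroup V] [InnerProductSpace ℝ V]
  {W : Type} [AddCommGroup W] [Module ℝ W]
  {L : Type} [LieRing L] [LieAlgebra ℂ L]

lemma g_le_uSp (S : SphericalSetup V W L) {α : V} (hα : α ∈ S.pos) :
    S.g α ≤ S.uSp (S.τ α) :=
  le_iSup₂ (f := fun a (_ : a ∈ {a ∈ S.pos | S.τ a = S.τ α}) => S.g a) α ⟨hα, rfl⟩

lemma active_c_one [FiniteDimensional ℂ L] (S : SphericalSetup V W L)
    (hS : S.Spherical) {α : V} (hα : α ∈ S.active) : S.c (S.τ α) = 1 := by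
  have h1 : S.c (S.τ α) ≤ 1 := hS.1 _
  rcases Nat.eq_zero_or_pos (S.c (S.τ α)) with h0 | h
  · exfalso
    have hfr : Module.finrank ℂ (S.uSp (S.τ α)) ≤
        Module.finrank ℂ ↥(S.n ⊓ S.uSp (S.τ α)) := Nat.sub_eq_zero_iff_le.mp h0
    have heq : S.n ⊓ S.uSp (S.τ α) = S.uSp (S.τ α) :=
      Submodule.eq_of_le_of_finrank_le inf_le_right hfr
    have hle : S.uSp (S.τ α) ≤ S.n := heq ▸ inf_le_left
    exact hα.2 (le_trans (S.g_le_uSp hα.1) hle)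
  · omega

end SphericalSetup

/-- Let `H` be a connected solvable spherical subgroup of `G` standardly embedded in `B`,
with set of active roots `Ψ`.  If `α` is an active root and `α = β + γ` with positive
roots `β, γ`, then exactly one of `β, γ` is active. -/
theorem xor_active_of_sum
    {V : Type} [NormedAddCommGroup V] [InnerProductSpace ℝ V]
    {W : Type} [AddCommGroup W] [Module ℝ W]
    {L : Type} [LieRing L] [LieAlgebra ℂ L] [FiniteDimensional ℂ L]
    (S : SphericalSetup V W L) (hS : S.Spherical)
    {α β γ : V} (hα : α ∈ S.active) (hβ : β ∈ S.pos) (hγ : γ ∈ S.pos)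
    (hsum : α = β + γ) :
    Xor' (β ∈ S.active) (γ ∈ S.active) := by
  classical
  by_cases hb : β ∈ S.active <;> by_cases hc : γ ∈ S.active
  · -- both active: contradicts linear independence of weights with c = 1
    exfalso
    set a : {w : W // S.c w = 1} := ⟨S.τ α, S.active_c_one hS hα⟩
    set b : {w : W // S.c w = 1} := ⟨S.τ β, S.active_c_one hS hb⟩
    set c : {w : W // S.c w = 1} := ⟨S.τ γ, S.active_c_one hS hc⟩
    have hrel : S.τ α = S.τ β + S.τ γ := by rw [hsum, map_add]
    set f : {w : W // S.c w = 1} → W := fun w => (w : W)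
    have hli := linearIndependent_iff'.mp hS.2
    set coeffs : {w : W // S.c w = 1} → ℝ := fun i =>
      (if i = a then 1 else 0) - (if i = b then 1 else 0) - (if i = c then 1 else 0)
    have hsum0 : ∑ i ∈ ({a, b, c} : Finset _), coeffs i • f i = 0 := by
      have h1 : ∀ j ∈ ({a, b, c} : Finset {w : W // S.c w = 1}),
          ∑ i ∈ ({a, b, c} : Finset _), (if i = j then (1:ℝ) else 0) • f i = f j := by
        intro j hj
        rw [Finset.sum_congr rfl (fun i _ => by
          rw [show (if i = j then (1:ℝ) else 0) • f i = if i = j then f i else 0 by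
            split <;> simp_all])]
        rw [Finset.sum_ite_eq' _ j f, if_pos hj]
      have := h1 a (by simp)
      have := h1 b (by simp)
      have := h1 c (by simp)
      simp only [coeffs, sub_smul]
      rw [Finset.sum_sub_distrib, Finset.sum_sub_distrib,
        h1 a (by simp), h1 b (by simp), h1 c (by simp)]
      have : f a = f b + f c := hrel
      rw [this]; abel
    have hz := hli ({a, b, c} : Finset _) coeffs hsum0
    by_cases hab : a = b
    · by_cases hac : a = c
      · have := hz a (by simp)
        simp [coeffs, ← hab, ← hac] at this
      · have := hz c (by simp)
        have hcb : c ≠ b := fun h => hac (hab.trans h.symm)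
        simp [coeffs, Ne.symm hac, hcb] at this
    · by_cases hac : a = c
      · have := hz b (by simp)
        have hbc : b ≠ c := fun h => hab (hac.trans h.symm)
        simp [coeffs, Ne.symm hab, hbc] at this
      · have := hz a (by simp)
        simp [coeffs, hab, hac] at this
  · exact Or.inl ⟨hb, hc⟩
  · exact Or.inr ⟨hc, hb⟩
  · -- both inactive: 𝔤_α = span ⁅x,y⁆ ⊆ 𝔫, contradiction
    exfalso
    have hbn : S.g β ≤ S.n := not_not.mp fun h => hb ⟨hβ, h⟩
    have hcn : S.g γ ≤ S.n := not_not.mp fun h => hc ⟨hγ, h⟩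
    obtain ⟨x, hx, y, hy, hxy⟩ := S.bracket_ne β hβ γ hγ (hsum ▸ hα.1)
    have hz1 : ⁅x, y⁆ ∈ S.g α := hsum ▸ S.bracket_mem β γ x hx y hy
    have hz2 : ⁅x, y⁆ ∈ S.n := S.n_bracket x (hbn hx) y (hcn hy)
    apply hα.2
    have hspan : Submodule.span ℂ {⁅x, y⁆} = S.g α := by
      apply Submodule.eq_of_le_of_finrank_le
      · rwa [Submodule.span_singleton_le_iff_mem]
      · rw [S.g_dim α hα.1, finrank_span_singleton hxy]
    rw [← hspan, Submodule.span_singleton_le_iff_mem]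
    exact hz2
end
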